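/- Let k ≥ 3 and d > d_k. Then φ_{d,k} is not tangent to the identity from below at its largest fixed point: there exists p ∈ (0, p*) with φ_{d,k}(p) > p. Moreover φ_{d,k} is concave on the interval [p*, 1]. -/

import Mathlib

open Real Set Filter

/-- Upper tail of the Poisson distribution with mean `lam`:
`P[Po(lam) ≥ m] = ∑_{j ≥ m} e^{-lam} lam^j / j!`. -/
noncomputable def poTail (lam : ℝ) (m : ℕ) : ℝ :=
  ∑' j : ℕ, if m ≤ j then Real.exp (-lam) * lam ^ j / (j.factorial : ℝ) else 0

/-- `f_k(λ) = λ / P[Po(λ) ≥ k-1]`. -/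
noncomputable def fPW (k : ℕ) (lam : ℝ) : ℝ := lam / poTail lam (k - 1)

/-- `d_k = inf { f_k(λ) : λ > 0 }`. -/
noncomputable def dPW (k : ℕ) : ℝ := sInf (fPW k '' Set.Ioi (0 : ℝ))

/-- `φ_{d,k}(p) = P[Po(dp) ≥ k-1]`. -/
noncomputable def phiPW (d : ℝ) (k : ℕ) (p : ℝ) : ℝ := poTail (d * p) (k - 1)

namespace PW

noncomputable def pS (m : ℕ) (x : ℝ) : ℝ := ∑ j ∈ Finset.range m, x ^ j / (j.factorial : ℝ)

lemma summable_g (lam : ℝ) :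
    Summable (fun j : ℕ => Real.exp (-lam) * lam ^ j / (j.factorial : ℝ)) := by
  simpa [mul_div_assoc] using (Real.summable_pow_div_factorial lam).mul_left (Real.exp (-lam))

lemma tsum_g (lam : ℝ) :
    ∑' j : ℕ, Real.exp (-lam) * lam ^ j / (j.factorial : ℝ) = 1 := by
  have he : Real.exp lam = ∑' j : ℕ, lam ^ j / (j.factorial : ℝ) := by
    rw [Real.exp_eq_exp_ℝ, NormedSpace.exp_eq_tsum_div]
  calc ∑' j : ℕ, Real.exp (-lam) * lam ^ j / (j.factorial : ℝ)
      = Real.exp (-lam) * ∑' j : ℕ, lam ^ j / (j.factorial : ℝ) := by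
        rw [← tsum_mul_left]; simp [mul_div_assoc]
    _ = 1 := by rw [← he, ← Real.exp_add]; simp

lemma summable_tail (lam : ℝ) (m : ℕ) :
    Summable (fun j : ℕ => if m ≤ j then Real.exp (-lam) * lam ^ j / (j.factorial : ℝ) else 0) := by
  have := (summable_g lam).indicator {j : ℕ | m ≤ j}
  convert this using 2 with j
  · rfl
  simp [Set.indicator_apply]

lemma poTail_eq (lam : ℝ) (m : ℕ) : poTail lam m = 1 - Real.exp (-lam) * pS m lam := by
  set g : ℕ → ℝ := fun j => Real.exp (-lam) * lam ^ j / (j.factorial : ℝ) with hg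
  have hgs : Summable g := summable_g lam
  have hFs : Summable (fun j : ℕ => if m ≤ j then g j else 0) := summable_tail lam m
  have hGs : Summable (fun j : ℕ => if j < m then g j else 0) :=
    summable_of_ne_finset_zero (s := Finset.range m) (by
      intro j hj
      simp only [Finset.mem_range, not_lt] at hj
      simp [Nat.not_lt.mpr hj])
  have hsplit : ∀ j : ℕ, g j = (if m ≤ j then g j else 0) + (if j < m then g j else 0) := by
    intro j
    rcases le_or_gt m j with h | h
    · simp [h, Nat.not_lt.mpr h]
    · simp [h, Nat.not_le.mpr h]
  have h1 : ∑' j, g j = poTail lam m + ∑' j : ℕ, (if j < m then g j else 0) := by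
    rw [poTail]
    rw [tsum_congr hsplit, Summable.tsum_add hFs hGs]
  have h2 : ∑' j : ℕ, (if j < m then g j else 0) = Real.exp (-lam) * pS m lam := by
    rw [tsum_eq_sum (s := Finset.range m)
      (by intro j hj; simp only [Finset.mem_range, not_lt] at hj; simp [Nat.not_lt.mpr hj])]
    rw [pS, Finset.mul_sum]
    apply Finset.sum_congr rfl
    intro j hj
    simp only [Finset.mem_range] at hj
    simp [hj, hg, mul_div_assoc]
  rw [tsum_g] at h1
  linarith [h1, h2]

lemma poTail_shift (lam : ℝ) (m : ℕ) :
    poTail lam m = ∑' i : ℕ, Real.exp (-lam) * lam ^ (i + m) / ((i + m).factorial : ℝ) := by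
  have h := Summable.sum_add_tsum_nat_add (f := fun j : ℕ => Real.exp (-lam) * lam ^ j / (j.factorial : ℝ))
    m (summable_g lam)
  have h2 : ∑ j ∈ Finset.range m, Real.exp (-lam) * lam ^ j / (j.factorial : ℝ)
      = Real.exp (-lam) * pS m lam := by
    rw [pS, Finset.mul_sum]; exact Finset.sum_congr rfl (by intro j _; rw [mul_div_assoc])
  rw [tsum_g, h2] at h
  rw [poTail_eq]
  linarith

lemma summable_shift (lam : ℝ) (m : ℕ) :
    Summable (fun i : ℕ => Real.exp (-lam) * lam ^ (i + m) / ((i + m).factorial : ℝ)) :=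
  (summable_nat_add_iff m).mpr (summable_g lam)

lemma poTail_nonneg {lam : ℝ} (h : 0 ≤ lam) (m : ℕ) : 0 ≤ poTail lam m := by
  apply tsum_nonneg
  intro j
  have : (0:ℝ) ≤ Real.exp (-lam) * lam ^ j / (j.factorial : ℝ) := by positivity
  split <;> simp [this]

lemma poTail_le_one {lam : ℝ} (h : 0 ≤ lam) (m : ℕ) : poTail lam m ≤ 1 := by
  rw [← tsum_g lam]
  apply Summable.tsum_le_tsum _ (summable_tail lam m) (summable_g lam)
  intro j
  split
  · exact le_rfl
  · positivity

lemma poTail_pos {lam : ℝ} (h : 0 < lam) (m : ℕ) : 0 < poTail lam m := by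
  have hterm : 0 < Real.exp (-lam) * lam ^ m / (m.factorial : ℝ) := by positivity
  calc (0:ℝ) < Real.exp (-lam) * lam ^ m / (m.factorial : ℝ) := hterm
    _ = (if m ≤ m then Real.exp (-lam) * lam ^ m / (m.factorial : ℝ) else 0) := by simp
    _ ≤ poTail lam m := by
        apply Summable.le_tsum (summable_tail lam m) m
        intro j _
        split
        · positivity
        · exact le_rfl

lemma hasDerivAt_pS (m : ℕ) (x : ℝ) : HasDerivAt (pS (m+1)) (pS m x) x := by
  induction m with
  | zero =>
    have h1 : pS 1 = fun _ : ℝ => 1 := by funext y; simp [pS]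
    rw [h1]
    simpa [pS] using hasDerivAt_const x (1:ℝ)
  | succ n ih =>
    have h1 : pS (n+2) = fun y : ℝ => pS (n+1) y + y^(n+1) / ((n+1).factorial : ℝ) := by
      funext y; simp [pS, Finset.sum_range_succ]
    rw [h1]
    have h2 : HasDerivAt (fun y : ℝ => y^(n+1) / ((n+1).factorial : ℝ))
        (x^n / (n.factorial : ℝ)) x := by
      have h3 := (hasDerivAt_pow (n+1) x).div_const ((n+1).factorial : ℝ)
      refine h3.congr_deriv ?_
      have hf : ((n+1).factorial : ℝ) = ((n:ℝ)+1) * (n.factorial : ℝ) := by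
        push_cast [Nat.factorial_succ]; ring
      rw [hf]
      simp only [Nat.add_sub_cancel]; push_cast
      have hn0 : (n.factorial : ℝ) ≠ 0 := by positivity
      field_simp
    have h4 := ih.add h2
    refine h4.congr_deriv ?_
    simp [pS, Finset.sum_range_succ]

lemma hasDerivAt_poTail (m : ℕ) (x : ℝ) :
    HasDerivAt (fun y => poTail y (m+1)) (Real.exp (-x) * x ^ m / (m.factorial : ℝ)) x := by
  have hfun : (fun y => poTail y (m+1)) = fun y => 1 - Real.exp (-y) * pS (m+1) y := by
    funext y; rw [poTail_eq]
  rw [hfun]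
  have hexp : HasDerivAt (fun y : ℝ => Real.exp (-y)) (-Real.exp (-x)) x := by
    exact ((Real.hasDerivAt_exp (-x)).comp x (hasDerivAt_neg x)).congr_deriv (by ring)
  have h5 := (hasDerivAt_const x (1:ℝ)).sub (hexp.mul (hasDerivAt_pS m x))
  refine h5.congr_deriv ?_
  have h6 : pS (m+1) x = pS m x + x ^ m / (m.factorial : ℝ) := by
    simp [pS, Finset.sum_range_succ]
  rw [h6]; ring

lemma fact_ge (a : ℕ) (i : ℕ) : (a+2).factorial * (a+3)^i ≤ (i + (a+2)).factorial := by
  induction i with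
  | zero => simp
  | succ n ih =>
    have heq : (n + 1 + (a+2)).factorial = (n + (a+3)) * (n + (a+2)).factorial := by
      rw [show n+1+(a+2) = (n+(a+2))+1 by ring, Nat.factorial_succ]; ring
    calc (a+2).factorial * (a+3)^(n+1) = (a+3) * ((a+2).factorial * (a+3)^n) := by ring
      _ ≤ (a+3) * (n + (a+2)).factorial := Nat.mul_le_mul_left _ ih
      _ ≤ (n + (a+3)) * (n + (a+2)).factorial := Nat.mul_le_mul_right _ (by omega)
      _ = _ := heq.symm

lemma key_ineq (a : ℕ) {lam : ℝ} (h0 : 0 < lam) (h1 : lam ≤ (a:ℝ)+1) :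
    poTail lam (a+2) < lam * (Real.exp (-lam) * lam ^ (a+1) / ((a+1).factorial : ℝ)) := by
  set A : ℝ := Real.exp (-lam) * lam ^ (a+2) / ((a+2).factorial : ℝ) with hA
  have hApos : 0 < A := by positivity
  set r : ℝ := lam / ((a:ℝ)+3) with hr
  have hr0 : 0 ≤ r := by positivity
  have hr1 : r < 1 := by
    rw [hr, div_lt_one (by positivity)]; linarith
  have hterm : ∀ i : ℕ,
      Real.exp (-lam) * lam ^ (i + (a+2)) / ((i + (a+2)).factorial : ℝ) ≤ A * r ^ i := by
    intro i
    have hfact : ((a+2).factorial : ℝ) * ((a:ℝ)+3)^i ≤ ((i + (a+2)).factorial : ℝ) := by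
      have h := fact_ge a i
      exact_mod_cast h
    have hlhs : Real.exp (-lam) * lam ^ (i + (a+2)) / ((i + (a+2)).factorial : ℝ)
        = (Real.exp (-lam) * lam ^ (a+2) * lam ^ i) / ((i + (a+2)).factorial : ℝ) := by
      rw [pow_add]; ring
    have hrhs : A * r ^ i
        = (Real.exp (-lam) * lam ^ (a+2) * lam ^ i) / (((a+2).factorial : ℝ) * ((a:ℝ)+3)^i) := by
      rw [hA, hr, div_pow, div_mul_div_comm]
    rw [hlhs, hrhs]
    apply div_le_div_of_nonneg_left (by positivity) (by positivity) hfact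
  have hgeo : Summable (fun i : ℕ => A * r ^ i) :=
    (summable_geometric_of_lt_one hr0 hr1).mul_left A
  have hsum : poTail lam (a+2) ≤ A * (1-r)⁻¹ := by
    rw [poTail_shift]
    calc ∑' i : ℕ, Real.exp (-lam) * lam ^ (i + (a+2)) / ((i + (a+2)).factorial : ℝ)
        ≤ ∑' i : ℕ, A * r ^ i := Summable.tsum_le_tsum hterm (summable_shift lam (a+2)) hgeo
      _ = A * (1-r)⁻¹ := by rw [tsum_mul_left, tsum_geometric_of_lt_one hr0 hr1]
  have h2 : 2/((a:ℝ)+3) ≤ 1 - r := by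
    rw [hr, le_sub_iff_add_le, ← add_div, div_le_one (by positivity)]
    linarith
  have hinv : (1-r)⁻¹ ≤ ((a:ℝ)+3)/2 := by
    have hp : (0:ℝ) < 2/((a:ℝ)+3) := by positivity
    have := one_div_le_one_div_of_le hp h2
    rw [one_div] at this
    calc (1-r)⁻¹ ≤ 1/(2/((a:ℝ)+3)) := this
      _ = ((a:ℝ)+3)/2 := by rw [one_div_div]
  have hRHS : lam * (Real.exp (-lam) * lam ^ (a+1) / ((a+1).factorial : ℝ)) = A * ((a:ℝ)+2) := by
    rw [hA]
    have hf : ((a+2).factorial : ℝ) = ((a:ℝ)+2) * ((a+1).factorial : ℝ) := by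
      push_cast [Nat.factorial_succ]; ring
    rw [hf]
    have h1f : ((a+1).factorial : ℝ) ≠ 0 := by positivity
    field_simp
    ring
  rw [hRHS]
  calc poTail lam (a+2) ≤ A * (1-r)⁻¹ := hsum
    _ ≤ A * (((a:ℝ)+3)/2) := by nlinarith
    _ < A * ((a:ℝ)+2) := by nlinarith

lemma fPW_def (a : ℕ) (lam : ℝ) : fPW (a+3) lam = lam / poTail lam (a+2) := rfl

lemma phiPW_def (d : ℝ) (a : ℕ) (p : ℝ) : phiPW d (a+3) p = poTail (d*p) (a+2) := rfl

lemma hasDerivAt_phi (d : ℝ) (a : ℕ) (p : ℝ) :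
    HasDerivAt (phiPW d (a+3))
      (Real.exp (-(d*p)) * (d*p) ^ (a+1) / ((a+1).factorial : ℝ) * d) p := by
  have hg : HasDerivAt (fun y : ℝ => d * y) d p := by
    simpa using (hasDerivAt_id p).const_mul d
  have := (hasDerivAt_poTail (a+1) (d*p)).comp p hg
  exact this

lemma continuous_phi (d : ℝ) (a : ℕ) : Continuous (phiPW d (a+3)) :=
  continuous_iff_continuousAt.mpr fun p => (hasDerivAt_phi d a p).continuousAt

lemma fPW_strictAnti (a : ℕ) : StrictAntiOn (fPW (a+3)) (Set.Ioc 0 ((a:ℝ)+1)) := by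
  have hderiv : ∀ x : ℝ, 0 < x → HasDerivAt (fPW (a+3))
      ((poTail x (a+2) - x * (Real.exp (-x) * x ^ (a+1) / ((a+1).factorial : ℝ)))
        / (poTail x (a+2))^2) x := by
    intro x hx
    have hP : poTail x (a+2) ≠ 0 := (poTail_pos hx _).ne'
    have h := (hasDerivAt_id x).div (hasDerivAt_poTail (a+1) x) hP
    have hfun : fPW (a+3) = fun y => y / poTail y (a+2) := rfl
    rw [hfun]
    refine h.congr_deriv ?_
    simp only [id_eq, one_mul]
  apply strictAntiOn_of_deriv_neg (convex_Ioc _ _)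
  · intro x hx
    exact ((hderiv x hx.1).continuousAt).continuousWithinAt
  · intro x hx
    rw [interior_Ioc] at hx
    rw [(hderiv x hx.1).deriv]
    have hkey := key_ineq a hx.1 hx.2.le
    have hP := poTail_pos hx.1 (a+2)
    apply div_neg_of_neg_of_pos
    · linarith
    · positivity

lemma exists_fixpoint (d : ℝ) (a : ℕ) (hd0 : 0 ≤ d) {q0 : ℝ} (h0 : 0 < q0) (h1 : q0 ≤ 1)
    (hphi : q0 < phiPW d (a+3) q0) :
    ∃ q, q ∈ Set.Icc (0:ℝ) 1 ∧ phiPW d (a+3) q = q ∧ q0 < q := by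
  set G : ℝ → ℝ := fun p => phiPW d (a+3) p - p with hG
  have hcont : ContinuousOn G (Set.Icc q0 1) :=
    ((continuous_phi d a).sub continuous_id).continuousOn
  have hd1 : (0:ℝ) ≤ d * 1 := by linarith
  have hG1 : G 1 ≤ 0 := by
    have h2 : phiPW d (a+3) 1 ≤ 1 := poTail_le_one hd1 (a+2)
    simp only [hG]; linarith
  have hGq : 0 < G q0 := by simp only [hG]; linarith
  have h0mem : (0:ℝ) ∈ Set.Icc (G 1) (G q0) := ⟨hG1, hGq.le⟩
  obtain ⟨q, hqmem, hq⟩ := intermediate_value_Icc' h1 hcont h0mem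
  have hfix : phiPW d (a+3) q = q := by
    have hq0 : G q = 0 := hq
    simp only [hG] at hq0; linarith
  refine ⟨q, ⟨le_trans h0.le hqmem.1, hqmem.2⟩, hfix, ?_⟩
  rcases lt_or_eq_of_le hqmem.1 with h | h
  · exact h
  · exfalso; rw [← h] at hfix; rw [hfix] at hphi; exact lt_irrefl _ hphi

end PW

theorem stmt_9 (k : ℕ) (hk : 3 ≤ k) (d : ℝ) (hd : dPW k < d)
    (pstar : ℝ) (hp_mem : pstar ∈ Set.Icc (0 : ℝ) 1) (hp_fix : phiPW d k pstar = pstar)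
    (hp_max : ∀ p ∈ Set.Icc (0 : ℝ) 1, phiPW d k p = p → p ≤ pstar) :
    (∃ p : ℝ, 0 < p ∧ p < pstar ∧ p < phiPW d k p) ∧
    ConcaveOn ℝ (Set.Icc pstar 1) (phiPW d k) := by
  obtain ⟨a, rfl⟩ : ∃ a, k = a + 3 := ⟨k - 3, by omega⟩
  clear hk
  -- d is positive
  have hdk0 : 0 ≤ dPW (a+3) := by
    apply Real.sInf_nonneg
    rintro x ⟨lam, hlam, rfl⟩
    rw [Set.mem_Ioi] at hlam
    exact div_nonneg hlam.le (PW.poTail_nonneg hlam.le _)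
  have hd0 : 0 < d := lt_of_le_of_lt hdk0 hd
  -- find lam0 with fPW lam0 < d
  have hne : (fPW (a+3) '' Set.Ioi (0:ℝ)).Nonempty := ⟨fPW (a+3) 1, 1, by norm_num, rfl⟩
  have hd' : sInf (fPW (a+3) '' Set.Ioi (0:ℝ)) < d := hd
  obtain ⟨x, ⟨lam0, hlam0, rfl⟩, hx⟩ := exists_lt_of_csInf_lt hne hd'
  rw [Set.mem_Ioi] at hlam0
  have hP0 : 0 < poTail lam0 (a+2) := PW.poTail_pos hlam0 _
  have hlt : lam0 < d * poTail lam0 (a+2) := by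
    rw [PW.fPW_def, div_lt_iff₀ hP0] at hx
    linarith [hx, mul_comm d (poTail lam0 (a+2))]
  have hlam0d : lam0 < d := by
    nlinarith [PW.poTail_le_one hlam0.le (a+2), hlt, hd0]
  set p0 : ℝ := lam0 / d with hp0
  have hp0pos : 0 < p0 := div_pos hlam0 hd0
  have hp0lt1 : p0 < 1 := (div_lt_one hd0).mpr hlam0d
  have hdp0 : d * p0 = lam0 := by rw [hp0]; field_simp
  have hphi0 : p0 < phiPW d (a+3) p0 := by
    rw [PW.phiPW_def, hdp0, hp0, div_lt_iff₀ hd0]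
    linarith [hlt, mul_comm d (poTail lam0 (a+2))]
  obtain ⟨q, hqmem, hqfix, hq0lt⟩ := PW.exists_fixpoint d a hd0.le hp0pos hp0lt1.le hphi0
  have hqle : q ≤ pstar := hp_max q hqmem hqfix
  have hp0star : p0 < pstar := lt_of_lt_of_le hq0lt hqle
  have hpstarpos : 0 < pstar := lt_trans hp0pos hp0star
  -- the key location fact: d * pstar ≥ a + 1  (i.e. λ* ≥ k - 2)
  have hH : (a:ℝ)+1 ≤ d * pstar := by
    by_contra hcon
    push_neg at hcon
    have hls : 0 < d * pstar := mul_pos hd0 hpstarpos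
    have hfix' : poTail (d * pstar) (a+2) = pstar := hp_fix
    have hfstar : fPW (a+3) (d * pstar) = d := by
      rw [PW.fPW_def, hfix']
      field_simp
    have hmem1 : (d*pstar) ∈ Set.Ioc (0:ℝ) ((a:ℝ)+1) := ⟨hls, hcon.le⟩
    have hmem2 : ((a:ℝ)+1) ∈ Set.Ioc (0:ℝ) ((a:ℝ)+1) := ⟨by positivity, le_rfl⟩
    have hmono := PW.fPW_strictAnti a hmem1 hmem2 hcon
    rw [hfstar] at hmono
    set mu : ℝ := (a:ℝ)+1 with hmu
    have hmupos : 0 < mu := by rw [hmu]; positivity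
    have hPmu : 0 < poTail mu (a+2) := PW.poTail_pos hmupos _
    have hmult : mu < d * poTail mu (a+2) := by
      rw [PW.fPW_def, div_lt_iff₀ hPmu] at hmono
      linarith [hmono, mul_comm d (poTail mu (a+2))]
    have hmud : mu < d := by
      nlinarith [PW.poTail_le_one hmupos.le (a+2), hmult, hd0]
    set q1 : ℝ := mu / d with hq1
    have hq1pos : 0 < q1 := div_pos hmupos hd0
    have hq1lt1 : q1 < 1 := (div_lt_one hd0).mpr hmud
    have hdq1 : d * q1 = mu := by rw [hq1]; field_simp
    have hphiq1 : q1 < phiPW d (a+3) q1 := by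
      rw [PW.phiPW_def, hdq1, hq1, div_lt_iff₀ hd0]
      linarith [hmult, mul_comm d (poTail mu (a+2))]
    have hq1star : pstar < q1 := by
      rw [hq1, lt_div_iff₀ hd0]
      linarith [hcon, mul_comm pstar d]
    obtain ⟨q2, hq2mem, hq2fix, hq2gt⟩ := PW.exists_fixpoint d a hd0.le hq1pos hq1lt1.le hphiq1
    have := hp_max q2 hq2mem hq2fix
    linarith
  constructor
  · exact ⟨p0, hp0pos, hp0star, hphi0⟩
  -- Concavity on [pstar, 1]
  · have hEderiv : ∀ t : ℝ,
        HasDerivAt (fun t : ℝ => Real.exp (-t) * t ^ (a+1) / ((a+1).factorial : ℝ))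
        ((-Real.exp (-t) * t ^ (a+1) + Real.exp (-t) * (((a:ℝ)+1) * t ^ a))
          / ((a+1).factorial : ℝ)) t := by
      intro t
      have hexp : HasDerivAt (fun y : ℝ => Real.exp (-y)) (-Real.exp (-t)) t := by
        exact ((Real.hasDerivAt_exp (-t)).comp t (hasDerivAt_neg t)).congr_deriv (by ring)
      have hpow := hasDerivAt_pow (a+1) t
      have := (hexp.mul hpow).div_const ((a+1).factorial : ℝ)
      refine this.congr_deriv ?_
      push_cast
      ring
    have hE : AntitoneOn (fun t : ℝ => Real.exp (-t) * t ^ (a+1) / ((a+1).factorial : ℝ))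
        (Set.Ici ((a:ℝ)+1)) := by
      apply antitoneOn_of_deriv_nonpos (convex_Ici _)
      · exact fun t _ => (hEderiv t).continuousAt.continuousWithinAt
      · intro t _
        exact ((hEderiv t).differentiableAt).differentiableWithinAt
      · intro t ht
        rw [interior_Ici] at ht
        rw [(hEderiv t).deriv]
        have ht1 : (a:ℝ)+1 < t := ht
        have ha0 : (0:ℝ) ≤ (a:ℝ) := Nat.cast_nonneg a
        have ht0 : 0 < t := by linarith
        apply div_nonpos_of_nonpos_of_nonneg _ (by positivity)
        have hfac : -Real.exp (-t) * t ^ (a+1) + Real.exp (-t) * (((a:ℝ)+1) * t ^ a)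
            = Real.exp (-t) * t ^ a * (((a:ℝ)+1) - t) := by ring
        rw [hfac]
        apply mul_nonpos_of_nonneg_of_nonpos (by positivity)
        linarith
    have hderivphi : ∀ p, deriv (phiPW d (a+3)) p
        = Real.exp (-(d*p)) * (d*p)^(a+1) / ((a+1).factorial : ℝ) * d :=
      fun p => (PW.hasDerivAt_phi d a p).deriv
    have hanti : AntitoneOn (deriv (phiPW d (a+3))) (interior (Set.Icc pstar 1)) := by
      rw [interior_Icc]
      intro p hp q' hq' hpq
      rw [hderivphi, hderivphi]
      have h1 : (a:ℝ)+1 ≤ d*p := le_trans hH (by nlinarith [hp.1])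
      have h2 : d*p ≤ d*q' := by nlinarith
      have := hE (show d*p ∈ Set.Ici ((a:ℝ)+1) from h1)
        (show d*q' ∈ Set.Ici ((a:ℝ)+1) from le_trans h1 h2) h2
      simp only [] at this
      exact mul_le_mul_of_nonneg_right this hd0.le
    exact hanti.concaveOn_of_deriv (convex_Icc _ _) (PW.continuous_phi d a).continuousOn
      (fun p _ => (PW.hasDerivAt_phi d a p).differentiableAt.differentiableWithinAt)
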